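/- For n ≥ 2, the sum over all derangements σ of [n] of (-1)^{cyc(σ)} x^{rlm(σ)} y^{exc(σ)} equals -∑_{j=1}^{n-1} x^j y^{n-j} = (xy/(x-y))(y^{n-1} - x^{n-1}) when x ≠ y. -/

import Mathlib

open Finset

/-- Number of cycles of a permutation (counting fixed points as 1-cycles). -/
def cyc {n : ℕ} (σ : Equiv.Perm (Fin n)) : ℕ :=
  σ.cycleType.card + (Finset.univ.filter fun i => σ i = i).card

/-- Set of excedance indices of a permutation. -/
def excIdx {n : ℕ} (σ : Equiv.Perm (Fin n)) : Finset (Fin n) :=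
  Finset.univ.filter fun i => i < σ i

/-- Set of right-to-left minimum indices. -/
def rlmIdx {n : ℕ} (σ : Equiv.Perm (Fin n)) : Finset (Fin n) :=
  Finset.univ.filter fun i => ∀ k, i < k → σ i < σ k

namespace Stmt9

open Equiv Equiv.Perm

lemma neg_one_pow_cyc {R : Type*} [Field R] {M : ℕ} (σ : Perm (Fin M))
    (hσ : ∀ i, σ i ≠ i) :
    ((-1 : R)) ^ cyc σ = (-1) ^ M * ((Perm.sign σ : ℤ) : R) := by
  have hfix : (Finset.univ.filter fun i => σ i = i) = ∅ := by
    apply Finset.filter_eq_empty_iff.2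
    intro i _
    exact hσ i
  have hcyc : cyc σ = Multiset.card σ.cycleType := by
    simp [cyc, hfix]
  have hsup : σ.support = Finset.univ := by
    apply Finset.eq_univ_iff_forall.2
    intro i; exact Equiv.Perm.mem_support.2 (hσ i)
  have hsum : σ.cycleType.sum = M := by
    rw [Equiv.Perm.sum_cycleType, hsup, Finset.card_univ, Fintype.card_fin]
  have hs := Equiv.Perm.sign_of_cycleType σ
  have hsR : ((Perm.sign σ : ℤ) : R) = (-1 : R) ^ (M + cyc σ) := by
    rw [hs, hsum, ← hcyc]
    push_cast
    norm_num
  rw [hsR, pow_add, ← mul_assoc, ← pow_add]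
  have h9 : (-1 : R) ^ (M + M) = 1 := by
    have h8 : Even (M + M) := ⟨M, rfl⟩
    exact h8.neg_one_pow
  rw [h9, one_mul]




def ext {m : ℕ} (σ : Perm (Fin m)) : Perm (Fin (m + 1)) :=
  finSuccEquivLast.symm.permCongr σ.optionCongr
@[simp] lemma ext_castSucc {m : ℕ} (σ : Perm (Fin m)) (i : Fin m) :
    ext σ i.castSucc = (σ i).castSucc := by
  simp [ext, Equiv.permCongr_apply]
@[simp] lemma ext_last {m : ℕ} (σ : Perm (Fin m)) :
    ext σ (Fin.last m) = Fin.last m := by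
  simp [ext, Equiv.permCongr_apply]

@[simp] lemma sign_ext {m : ℕ} (σ : Perm (Fin m)) :
    Perm.sign (ext σ) = Perm.sign σ := by
  simp [ext]

lemma ext_inj {m : ℕ} {σ τ : Perm (Fin m)} (h : ext σ = ext τ) : σ = τ := by
  apply Equiv.ext
  intro i
  have h2 := congrArg (fun f : Perm (Fin (m+1)) => f i.castSucc) h
  simp only [ext_castSucc] at h2
  exact Fin.castSucc_injective _ h2


lemma exists_ext {m : ℕ} (σ : Perm (Fin (m + 1))) (h : σ (Fin.last m) = Fin.last m) :
    ∃ τ : Perm (Fin m), ext τ = σ := by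
  have hne : ∀ i : Fin m, σ i.castSucc ≠ Fin.last m := by
    intro i hEq
    have : i.castSucc = Fin.last m := σ.injective (hEq.trans h.symm)
    exact (Fin.castSucc_lt_last i).ne this
  have hne' : ∀ i : Fin m, σ⁻¹ i.castSucc ≠ Fin.last m := by
    intro i hEq
    have : i.castSucc = σ (Fin.last m) := by
      rw [← hEq]; simp
    rw [h] at this
    exact (Fin.castSucc_lt_last i).ne this
  refine ⟨⟨fun i => (σ i.castSucc).castPred (hne i),
          fun i => (σ⁻¹ i.castSucc).castPred (hne' i), ?_, ?_⟩, ?_⟩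
  · intro i
    apply Fin.castSucc_injective
    simp
  · intro i
    apply Fin.castSucc_injective
    simp
  · apply Equiv.ext
    intro j
    induction j using Fin.lastCases with
    | last => rw [ext_last, h]
    | cast i =>
        show (ext _ i.castSucc) = σ i.castSucc
        rw [ext_castSucc]
        exact Fin.castSucc_castPred _ (hne i)



variable {m : ℕ}
def aa (m : ℕ) : Fin (m + 2) := (Fin.last m).castSucc
def bb (m : ℕ) : Fin (m + 2) := Fin.last (m + 1)
def cw (m : ℕ) : Equiv.Perm (Fin (m + 2)) := Equiv.swap (aa m) (bb m)
@[simp] lemma val_aa : (aa m).val = m := rfl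
@[simp] lemma val_bb : (bb m).val = m + 1 := rfl
lemma aa_lt_bb : aa m < bb m := Fin.castSucc_lt_last (Fin.last m)
lemma aa_ne_bb : aa m ≠ bb m := ne_of_lt aa_lt_bb
@[simp] lemma cw_aa : cw m (aa m) = bb m := Equiv.swap_apply_left _ _
@[simp] lemma cw_bb : cw m (bb m) = aa m := Equiv.swap_apply_right _ _
lemma cw_ne {i : Fin (m + 2)} (h1 : i ≠ aa m) (h2 : i ≠ bb m) : cw m i = i :=
  Equiv.swap_apply_of_ne_of_ne h1 h2
lemma cw_invol'' (v : Fin (m + 2)) : cw m (cw m v) = v := Equiv.swap_apply_self _ _ _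

lemma lt_last_of_ne {M : ℕ} {j : Fin (M + 1)} (h : j ≠ Fin.last M) : j < Fin.last M := by
  have h1 := j.isLt
  have h2 : j.val ≠ M := fun hh => h (Fin.ext hh)
  simp only [Fin.lt_def, Fin.val_last]
  omega

lemma last_mem_rlm {M : ℕ} (τ : Perm (Fin (M + 1))) : Fin.last M ∈ rlmIdx τ := by
  simp only [rlmIdx, Finset.mem_filter, Finset.mem_univ, true_and]
  intro k hk
  exact absurd hk (not_lt.2 (Fin.le_last k))

lemma cs_ne_bb (j : Fin (m + 1)) : j.castSucc ≠ bb m := (Fin.castSucc_lt_last j).ne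
lemma val_lt_of_ne {i : Fin (m + 2)} (h1 : i ≠ aa m) (h2 : i ≠ bb m) : i.val < m := by
  have h3 := i.isLt
  have h4 : i.val ≠ m := fun h => h1 (Fin.ext h)
  have h5 : i.val ≠ m + 1 := fun h => h2 (Fin.ext h)
  omega


lemma cs_eq_aa_iff {j : Fin (m + 1)} : j.castSucc = aa m ↔ j = Fin.last m :=
  Fin.castSucc_inj

def hB (m : ℕ) (j : Fin (m + 1)) : Fin (m + 2) :=
  if j = Fin.last m then bb m else j.castSucc

lemma hB_inj : Function.Injective (hB m) := by
  intro j1 j2 h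
  unfold hB at h
  split_ifs at h with h1 h2 h2
  · rw [h1, h2]
  · exact absurd h.symm (cs_ne_bb j2)
  · exact absurd h (cs_ne_bb j1)
  · exact Fin.castSucc_inj.1 h


section S4
variable {σ : Perm (Fin (m + 2))} (hd : ∀ i, σ i ≠ i) (h1 : σ (aa m) ≠ bb m)
  (h2 : σ (bb m) ≠ aa m)

include hd h1 h2

lemma s4_mem : (∀ i, (cw m * σ) i ≠ i) ∧ (cw m * σ) (aa m) ≠ bb m ∧
    (cw m * σ) (bb m) ≠ aa m := by
  refine ⟨?_, ?_, ?_⟩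
  · intro i
    simp only [Perm.mul_apply]
    rcases eq_or_ne (σ i) (aa m) with h | ha
    · rw [h, cw_aa]
      intro hb
      exact h2 (by rw [hb, h])
    rcases eq_or_ne (σ i) (bb m) with h | hb
    · rw [h, cw_bb]
      intro hA
      exact h1 (by rw [hA, h])
    · rw [cw_ne ha hb]; exact hd i
  · simp only [Perm.mul_apply]
    rw [cw_ne (hd (aa m)) h1]; exact h1
  · simp only [Perm.mul_apply]
    rw [cw_ne h2 (hd (bb m))]; exact h2

lemma s4_exc : excIdx (cw m * σ) = excIdx σ := by
  ext i
  simp only [excIdx, Finset.mem_filter, Finset.mem_univ, true_and]; simp only [Perm.mul_apply]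
  rcases eq_or_ne (σ i) (aa m) with h | ha
  · have hia : i ≠ aa m := fun hh => hd i (h.trans hh.symm)
    have hib : i ≠ bb m := fun hh => h2 (by rw [← hh]; exact h)
    have hv := val_lt_of_ne hia hib
    rw [h, cw_aa]
    simp only [Fin.lt_def, val_aa, val_bb]
    omega
  rcases eq_or_ne (σ i) (bb m) with h | hb
  · have hib : i ≠ bb m := fun hh => hd i (h.trans hh.symm)
    have hia : i ≠ aa m := fun hh => h1 (by rw [← hh]; exact h)
    have hv := val_lt_of_ne hia hib
    rw [h, cw_bb]
    simp only [Fin.lt_def, val_aa, val_bb]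
    omega
  · rw [cw_ne ha hb]

lemma s4_rlm_sub : rlmIdx σ ⊆ rlmIdx (cw m * σ) := by
  intro i hi
  simp only [rlmIdx, Finset.mem_filter, Finset.mem_univ, true_and] at hi ⊢
  have hb' : σ i ≠ bb m := by
    intro h
    have hib : i ≠ bb m := fun hh => hd i (h.trans hh.symm)
    have hlt : i < bb m := by
      have := i.isLt
      have : i.val ≠ m + 1 := fun hh => hib (Fin.ext hh)
      simp only [Fin.lt_def, val_bb]; omega
    have := hi (bb m) hlt
    rw [h] at this
    have := this.trans_le (Fin.le_last _)
    exact absurd this (lt_irrefl _)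
  have ha' : σ i ≠ aa m := by
    intro h
    have hia : i ≠ aa m := fun hh => hd i (h.trans hh.symm)
    have hib : i ≠ bb m := fun hh => h2 (by rw [← hh]; exact h)
    have hv := val_lt_of_ne hia hib
    have hlt : i < aa m := by simp only [Fin.lt_def, val_aa]; omega
    have hgt := hi (aa m) hlt
    rw [h] at hgt
    have : σ (aa m) = bb m := by
      apply Fin.ext
      have hv2 := (σ (aa m)).isLt
      have := (Fin.lt_def).1 hgt
      simp only [val_aa] at this
      simp only [val_bb]
      omega
    exact h1 this
  have hv := val_lt_of_ne ha' hb'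
  intro k hk
  simp only [Perm.mul_apply]
  rw [cw_ne ha' hb']
  rcases eq_or_ne (σ k) (aa m) with h | hka
  · rw [h, cw_aa]
    simp only [Fin.lt_def, val_bb]; omega
  rcases eq_or_ne (σ k) (bb m) with h | hkb
  · rw [h, cw_bb]
    simp only [Fin.lt_def, val_aa]; omega
  · rw [cw_ne hka hkb]
    exact hi k hk

end S4

section B
variable (σ' : Perm (Fin (m + 1)))

lemma phiB_aa : (ext σ' * cw m) (aa m) = bb m := by
  simp only [Perm.mul_apply, cw_aa]
  exact ext_last σ'

lemma phiB_bb : (ext σ' * cw m) (bb m) = (σ' (Fin.last m)).castSucc := by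
  simp only [Perm.mul_apply, cw_bb]
  show ext σ' (Fin.last m).castSucc = _
  exact ext_castSucc σ' _

lemma phiB_cs {j : Fin (m + 1)} (hj : j ≠ Fin.last m) :
    (ext σ' * cw m) j.castSucc = (σ' j).castSucc := by
  simp only [Perm.mul_apply]
  rw [cw_ne (fun h => hj (cs_eq_aa_iff.1 h)) (cs_ne_bb j), ext_castSucc]

lemma phiB_aa' : (ext σ' * cw m) ((Fin.last m).castSucc) = bb m := phiB_aa σ'
lemma phiB_bb' : (ext σ' * cw m) (Fin.last (m + 1)) = (σ' (Fin.last m)).castSucc := phiB_bb σ'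

variable (hd' : ∀ i, σ' i ≠ i)
include hd'

lemma phiB_mem : (∀ i, (ext σ' * cw m) i ≠ i) ∧ (ext σ' * cw m) (aa m) = bb m ∧
    (ext σ' * cw m) (bb m) ≠ aa m := by
  refine ⟨?_, phiB_aa σ', ?_⟩
  · intro i
    induction i using Fin.lastCases with
    | last =>
        rw [phiB_bb']
        exact cs_ne_bb _
    | cast j =>
        rcases eq_or_ne j (Fin.last m) with rfl | hj
        · rw [phiB_aa']
          exact fun h => aa_ne_bb h.symm
        · rw [phiB_cs σ' hj]
          exact fun h => hd' j (Fin.castSucc_inj.1 h)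
  · rw [phiB_bb]
    exact fun h => hd' (Fin.last m) (cs_eq_aa_iff.1 h)

lemma phiB_exc : excIdx (ext σ' * cw m) = insert (aa m) ((excIdx σ').image Fin.castSucc) := by
  ext i
  simp only [excIdx, Finset.mem_filter, Finset.mem_univ, true_and, Finset.mem_insert,
    Finset.mem_image]
  induction i using Fin.lastCases with
  | last =>
      rw [phiB_bb']
      constructor
      · intro h
        exact absurd h (lt_asymm (Fin.castSucc_lt_last _))
      · rintro (h | ⟨j, _, hj⟩)
        · exact absurd h.symm (aa_ne_bb)
        · exact absurd hj (cs_ne_bb j)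
  | cast j =>
      rcases eq_or_ne j (Fin.last m) with rfl | hj
      · rw [phiB_aa']
        constructor
        · intro _; exact Or.inl rfl
        · intro _; exact aa_lt_bb
      · rw [phiB_cs σ' hj, Fin.castSucc_lt_castSucc_iff]
        constructor
        · intro h
          exact Or.inr ⟨j, h, rfl⟩
        · rintro (h | ⟨j', hj', hjj⟩)
          · exact absurd h (fun hh => hj (cs_eq_aa_iff.1 hh))
          · rwa [← Fin.castSucc_inj.1 hjj]

lemma phiB_rlm : rlmIdx (ext σ' * cw m) = (rlmIdx σ').image (hB m) := by
  ext i
  simp only [rlmIdx, Finset.mem_filter, Finset.mem_univ, true_and, Finset.mem_image]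
  induction i using Fin.lastCases with
  | last =>
      constructor
      · intro _
        refine ⟨Fin.last m, ?_, by simp [hB, bb]⟩
        have := last_mem_rlm σ'
        simpa [rlmIdx] using this
      · intro _ k hk
        exact absurd hk (not_lt.2 (Fin.le_last k))
  | cast j =>
      rcases eq_or_ne j (Fin.last m) with rfl | hj
      · -- i = aa m : never a rlm of ΦB, and not in image
        constructor
        · intro h
          have hlt : (Fin.last m).castSucc < bb m := aa_lt_bb
          have h2 := h (bb m) hlt
          rw [phiB_bb, phiB_aa'] at h2
          exact absurd h2 (lt_asymm (Fin.castSucc_lt_last _))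
        · rintro ⟨j', _, hjj⟩
          unfold hB at hjj
          split_ifs at hjj with hcase
          · exact absurd hjj aa_ne_bb.symm
          · exact absurd (cs_eq_aa_iff.1 hjj) hcase
      · rw [phiB_cs σ' hj]
        constructor
        · intro h
          refine ⟨j, ?_, by simp [hB, hj]⟩
          intro k' hk'
          rcases eq_or_ne k' (Fin.last m) with rfl | hk'ne
          · have h2 := h (bb m) (Fin.castSucc_lt_last _)
            rw [phiB_bb] at h2
            exact Fin.castSucc_lt_castSucc_iff.1 h2
          · have h2 := h k'.castSucc (Fin.castSucc_lt_castSucc_iff.2 hk')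
            rw [phiB_cs σ' hk'ne] at h2
            exact Fin.castSucc_lt_castSucc_iff.1 h2
        · rintro ⟨j', hj', hjj⟩
          unfold hB at hjj
          split_ifs at hjj with hcase
          · exact absurd hjj (cs_ne_bb j).symm
          obtain rfl := Fin.castSucc_inj.1 hjj
          intro k hk
          induction k using Fin.lastCases with
          | last =>
              rw [phiB_bb', Fin.castSucc_lt_castSucc_iff]
              exact hj' (Fin.last m) (lt_last_of_ne hcase)
          | cast k2 =>
              rcases eq_or_ne k2 (Fin.last m) with rfl | hk2
              · rw [phiB_aa']
                exact Fin.castSucc_lt_last _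
              · rw [phiB_cs σ' hk2]
                rw [Fin.castSucc_lt_castSucc_iff] at hk ⊢
                exact hj' k2 hk

end B

section C
variable (σ' : Perm (Fin (m + 1)))

lemma phiC_bb : (cw m * ext σ') (Fin.last (m + 1)) = aa m := by
  have : ext σ' (Fin.last (m + 1)) = Fin.last (m + 1) := ext_last σ'
  simp only [Perm.mul_apply, this]
  exact cw_bb

lemma phiC_cs_last {j : Fin (m + 1)} (h : σ' j = Fin.last m) :
    (cw m * ext σ') j.castSucc = bb m := by
  simp only [Perm.mul_apply, ext_castSucc, h]
  exact cw_aa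

lemma phiC_cs_ne {j : Fin (m + 1)} (h : σ' j ≠ Fin.last m) :
    (cw m * ext σ') j.castSucc = (σ' j).castSucc := by
  simp only [Perm.mul_apply, ext_castSucc]
  exact cw_ne (fun hh => h (Fin.castSucc_inj.1 hh)) (cs_ne_bb _)

variable (hd' : ∀ i, σ' i ≠ i)
include hd'

lemma phiC_mem : (∀ i, (cw m * ext σ') i ≠ i) ∧ (cw m * ext σ') (aa m) ≠ bb m ∧
    (cw m * ext σ') (bb m) = aa m := by
  refine ⟨?_, ?_, phiC_bb σ'⟩
  · intro i
    induction i using Fin.lastCases with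
    | last =>
        rw [phiC_bb]
        exact aa_ne_bb
    | cast j =>
        rcases eq_or_ne (σ' j) (Fin.last m) with h | h
        · rw [phiC_cs_last σ' h]
          exact fun hh => (cs_ne_bb j) hh.symm
        · rw [phiC_cs_ne σ' h]
          exact fun hh => hd' j (Fin.castSucc_inj.1 hh)
  · show (cw m * ext σ') (Fin.last m).castSucc ≠ bb m
    rw [phiC_cs_ne σ' (hd' (Fin.last m))]
    exact cs_ne_bb _

lemma phiC_exc : excIdx (cw m * ext σ') = (excIdx σ').image Fin.castSucc := by
  ext i
  simp only [excIdx, Finset.mem_filter, Finset.mem_univ, true_and, Finset.mem_image]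
  induction i using Fin.lastCases with
  | last =>
      rw [phiC_bb]
      constructor
      · intro h
        exact absurd h (not_lt.2 (le_of_lt aa_lt_bb))
      · rintro ⟨j, _, hj⟩
        exact absurd hj (cs_ne_bb j)
  | cast j =>
      rcases eq_or_ne (σ' j) (Fin.last m) with h | h
      · rw [phiC_cs_last σ' h]
        have hjne : j ≠ Fin.last m := fun hh => hd' j (h.trans hh.symm)
        constructor
        · intro _
          exact ⟨j, by rw [h]; exact lt_last_of_ne hjne, rfl⟩
        · intro _
          exact Fin.castSucc_lt_last _
      · rw [phiC_cs_ne σ' h, Fin.castSucc_lt_castSucc_iff]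
        constructor
        · intro hh; exact ⟨j, hh, rfl⟩
        · rintro ⟨j2, hj2, hjj⟩
          rwa [← Fin.castSucc_inj.1 hjj]

lemma phiC_rlm : rlmIdx (cw m * ext σ') = insert (bb m) ((rlmIdx σ').image Fin.castSucc) := by
  ext i
  simp only [rlmIdx, Finset.mem_filter, Finset.mem_univ, true_and, Finset.mem_insert,
    Finset.mem_image]
  induction i using Fin.lastCases with
  | last =>
      constructor
      · intro _; exact Or.inl rfl
      · intro _ k hk
        exact absurd hk (not_lt.2 (Fin.le_last k))
  | cast j =>
      have hne : j.castSucc ≠ bb m := cs_ne_bb j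
      rcases eq_or_ne (σ' j) (Fin.last m) with h | h
      · have hjne : j ≠ Fin.last m := fun hh => hd' j (h.trans hh.symm)
        constructor
        · intro hcon
          have h2 := hcon (Fin.last (m + 1)) (Fin.castSucc_lt_last _)
          rw [phiC_bb, phiC_cs_last σ' h] at h2
          exact absurd h2 (not_lt.2 (le_of_lt aa_lt_bb))
        · rintro (hh | ⟨j2, hj2, hjj⟩)
          · exact absurd hh hne
          obtain rfl := Fin.castSucc_inj.1 hjj
          have h3 := hj2 (Fin.last m) (lt_last_of_ne hjne)
          rw [h] at h3
          exact absurd h3 (not_lt.2 (Fin.le_last _))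
      · rw [phiC_cs_ne σ' h]
        constructor
        · intro hcon
          refine Or.inr ⟨j, ?_, rfl⟩
          intro k' hk'
          rcases eq_or_ne (σ' k') (Fin.last m) with h2 | h2
          · rw [h2]; exact lt_last_of_ne h
          · have h3 := hcon k'.castSucc (Fin.castSucc_lt_castSucc_iff.2 hk')
            rw [phiC_cs_ne σ' h2] at h3
            exact Fin.castSucc_lt_castSucc_iff.1 h3
        · rintro (hh | ⟨j2, hj2, hjj⟩)
          · exact absurd hh hne
          obtain rfl := Fin.castSucc_inj.1 hjj
          intro k hk
          induction k using Fin.lastCases with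
          | last =>
              rw [phiC_bb]
              show (σ' j2).castSucc < (Fin.last m).castSucc
              rw [Fin.castSucc_lt_castSucc_iff]
              exact lt_last_of_ne h
          | cast k2 =>
              rcases eq_or_ne (σ' k2) (Fin.last m) with h2 | h2
              · rw [phiC_cs_last σ' h2]
                exact Fin.castSucc_lt_last _
              · rw [phiC_cs_ne σ' h2, Fin.castSucc_lt_castSucc_iff]
                exact hj2 k2 (Fin.castSucc_lt_castSucc_iff.1 hk)

end C

section A
variable (σ'' : Perm (Fin m))

lemma phiA_aa' : (ext (ext σ'') * cw m) ((Fin.last m).castSucc) = bb m := by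
  simp only [Perm.mul_apply]
  rw [show cw m ((Fin.last m).castSucc) = bb m from cw_aa]

  exact ext_last _

lemma phiA_bb' : (ext (ext σ'') * cw m) (Fin.last (m + 1)) = aa m := by
  simp only [Perm.mul_apply]
  rw [show cw m (Fin.last (m + 1)) = aa m from cw_bb]
  show ext (ext σ'') (Fin.last m).castSucc = aa m
  rw [ext_castSucc, ext_last]
  rfl

lemma phiA_cc (j : Fin m) :
    (ext (ext σ'') * cw m) j.castSucc.castSucc = ((σ'' j).castSucc).castSucc := by
  simp only [Perm.mul_apply]
  rw [cw_ne (fun h => (Fin.castSucc_lt_last j).ne (Fin.castSucc_inj.1 h)) (cs_ne_bb _),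
    ext_castSucc, ext_castSucc]

variable (hd'' : ∀ i, σ'' i ≠ i)
include hd''

lemma phiA_mem : (∀ i, (ext (ext σ'') * cw m) i ≠ i) ∧
    (ext (ext σ'') * cw m) (aa m) = bb m ∧ (ext (ext σ'') * cw m) (bb m) = aa m := by
  refine ⟨?_, phiA_aa' σ'', phiA_bb' σ''⟩
  intro i
  induction i using Fin.lastCases with
  | last => rw [phiA_bb']; exact aa_ne_bb
  | cast j =>
      induction j using Fin.lastCases with
      | last => rw [phiA_aa']; exact fun h => aa_ne_bb h.symm
      | cast j' =>
          rw [phiA_cc σ'' j']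
          exact fun h => hd'' j' (Fin.castSucc_inj.1 (Fin.castSucc_inj.1 h))

lemma phiA_exc : excIdx (ext (ext σ'') * cw m) =
    insert (aa m) ((excIdx σ'').image fun j => j.castSucc.castSucc) := by
  ext i
  simp only [excIdx, Finset.mem_filter, Finset.mem_univ, true_and, Finset.mem_insert,
    Finset.mem_image]
  induction i using Fin.lastCases with
  | last =>
      rw [phiA_bb']
      constructor
      · intro h; exact absurd h (not_lt.2 (le_of_lt aa_lt_bb))
      · rintro (h | ⟨j, _, hj⟩)
        · exact absurd h.symm aa_ne_bb
        · exact absurd hj (cs_ne_bb _)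
  | cast j =>
      induction j using Fin.lastCases with
      | last =>
          rw [phiA_aa']
          constructor
          · intro _; exact Or.inl rfl
          · intro _; exact aa_lt_bb
      | cast j' =>
          rw [phiA_cc σ'' j', Fin.castSucc_lt_castSucc_iff, Fin.castSucc_lt_castSucc_iff]
          constructor
          · intro h; exact Or.inr ⟨j', h, rfl⟩
          · rintro (h | ⟨j2, hj2, hjj⟩)
            · exact absurd (Fin.castSucc_inj.1 h) (Fin.castSucc_lt_last j').ne
            · obtain rfl := Fin.castSucc_inj.1 (Fin.castSucc_inj.1 hjj)
              exact hj2

lemma phiA_rlm : rlmIdx (ext (ext σ'') * cw m) =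
    insert (bb m) ((rlmIdx σ'').image fun j => j.castSucc.castSucc) := by
  ext i
  simp only [rlmIdx, Finset.mem_filter, Finset.mem_univ, true_and, Finset.mem_insert,
    Finset.mem_image]
  induction i using Fin.lastCases with
  | last =>
      constructor
      · intro _; exact Or.inl rfl
      · intro _ k hk
        exact absurd hk (not_lt.2 (Fin.le_last k))
  | cast j =>
      induction j using Fin.lastCases with
      | last =>
          constructor
          · intro hcon
            have h2 := hcon (Fin.last (m + 1)) (Fin.castSucc_lt_last _)
            rw [phiA_bb', phiA_aa'] at h2
            exact absurd h2 (not_lt.2 (le_of_lt aa_lt_bb))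
          · rintro (h | ⟨j2, _, hjj⟩)
            · exact absurd h (cs_ne_bb _)
            · exact absurd (Fin.castSucc_inj.1 hjj) (Fin.castSucc_lt_last _).ne
      | cast j' =>
          constructor
          · intro hcon
            refine Or.inr ⟨j', ?_, rfl⟩
            intro k' hk'
            have h2 := hcon k'.castSucc.castSucc
              (by rw [Fin.castSucc_lt_castSucc_iff, Fin.castSucc_lt_castSucc_iff]; exact hk')
            rw [phiA_cc σ'' j', phiA_cc σ'' k'] at h2
            rw [Fin.castSucc_lt_castSucc_iff, Fin.castSucc_lt_castSucc_iff] at h2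
            exact h2
          · rintro (h | ⟨j2, hj2, hjj⟩)
            · exact absurd h (cs_ne_bb _)
            obtain rfl := Fin.castSucc_inj.1 (Fin.castSucc_inj.1 hjj)
            intro k hk
            rw [phiA_cc σ'' j2]
            induction k using Fin.lastCases with
            | last =>
                rw [phiA_bb']
                show ((σ'' j2).castSucc).castSucc < (Fin.last m).castSucc
                rw [Fin.castSucc_lt_castSucc_iff]
                exact Fin.castSucc_lt_last _
            | cast k2 =>
                induction k2 using Fin.lastCases with
                | last =>
                    rw [phiA_aa']
                    exact Fin.castSucc_lt_last _
                | cast k2' =>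
                    rw [phiA_cc σ'' k2', Fin.castSucc_lt_castSucc_iff,
                      Fin.castSucc_lt_castSucc_iff]
                    apply hj2
                    rw [Fin.castSucc_lt_castSucc_iff, Fin.castSucc_lt_castSucc_iff] at hk
                    exact hk

end A

section Sums
variable {R : Type*} [Field R] (x y : R)

/-- the weight of a permutation -/
def wgt {M : ℕ} (x y : R) (σ : Perm (Fin M)) : R :=
  (-1) ^ cyc σ * x ^ (rlmIdx σ).card * y ^ (excIdx σ).card

/-- the main sum -/
def dsum (M : ℕ) (x y : R) : R :=
  ∑ σ ∈ Finset.univ.filter (fun σ : Perm (Fin M) => ∀ i, σ i ≠ i), wgt x y σ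

lemma last_not_mem_exc {M : ℕ} (τ : Perm (Fin (M + 1))) : Fin.last M ∉ excIdx τ := by
  simp only [excIdx, Finset.mem_filter, Finset.mem_univ, true_and]
  exact not_lt.2 (Fin.le_last _)

lemma cyc_flip {M : ℕ} (σ τ : Perm (Fin M)) (hσ : ∀ i, σ i ≠ i) (hτ : ∀ i, τ i ≠ i)
    (hs : Perm.sign τ = -Perm.sign σ) : ((-1 : R)) ^ cyc τ = -(-1) ^ cyc σ := by
  rw [neg_one_pow_cyc τ hτ, neg_one_pow_cyc σ hσ, hs]
  push_cast
  ring

lemma cyc_step {M : ℕ} (σ : Perm (Fin (M + 1))) (τ : Perm (Fin M))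
    (hσ : ∀ i, σ i ≠ i) (hτ : ∀ i, τ i ≠ i)
    (hs : Perm.sign σ = -Perm.sign τ) : ((-1 : R)) ^ cyc σ = (-1) ^ cyc τ := by
  rw [neg_one_pow_cyc σ hσ, neg_one_pow_cyc τ hτ, hs]
  push_cast
  rw [pow_succ]
  ring

lemma cyc_two_step {M : ℕ} (σ : Perm (Fin (M + 2))) (τ : Perm (Fin M))
    (hσ : ∀ i, σ i ≠ i) (hτ : ∀ i, τ i ≠ i)
    (hs : Perm.sign σ = -Perm.sign τ) : ((-1 : R)) ^ cyc σ = -(-1) ^ cyc τ := by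
  rw [neg_one_pow_cyc σ hσ, neg_one_pow_cyc τ hτ, hs]
  push_cast
  rw [pow_succ, pow_succ]
  ring

lemma sign_cw : Perm.sign (cw m) = -1 := Equiv.Perm.sign_swap aa_ne_bb

lemma cw_invol (σ : Perm (Fin (m + 2))) : cw m * (cw m * σ) = σ := by
  rw [← mul_assoc]
  unfold cw
  rw [Equiv.swap_mul_self, one_mul]

lemma mul_cw_cw (σ : Perm (Fin (m + 2))) : σ * cw m * cw m = σ := by
  rw [mul_assoc]
  unfold cw
  rw [Equiv.swap_mul_self, mul_one]

lemma sumS4 :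
    ∑ σ ∈ Finset.univ.filter
      (fun σ : Perm (Fin (m + 2)) => (∀ i, σ i ≠ i) ∧ σ (aa m) ≠ bb m ∧ σ (bb m) ≠ aa m),
      wgt x y σ = 0 := by
  apply Finset.sum_involution (fun σ _ => cw m * σ)
  · intro σ hσ
    simp only [Finset.mem_filter, Finset.mem_univ, true_and] at hσ
    obtain ⟨hd, h1, h2⟩ := hσ
    have hmem := s4_mem hd h1 h2
    have hexc := s4_exc hd h1 h2
    have hrlm : rlmIdx (cw m * σ) = rlmIdx σ := by
      apply Finset.Subset.antisymm
      · have h3 := s4_rlm_sub hmem.1 hmem.2.1 hmem.2.2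
        rwa [cw_invol σ] at h3
      · exact s4_rlm_sub hd h1 h2
    have hsign : Perm.sign (cw m * σ) = -Perm.sign σ := by
      rw [Equiv.Perm.sign_mul, sign_cw, neg_one_mul]
    have hcyc := cyc_flip (R := R) σ (cw m * σ) hd hmem.1 hsign
    unfold wgt
    rw [hexc, hrlm, hcyc]
    ring
  · intro σ hσ _
    intro hEq
    have h3 := congrArg (fun τ : Perm (Fin (m + 2)) => τ (σ⁻¹ (aa m))) hEq
    simp only [Perm.mul_apply, Perm.coe_inv, Equiv.apply_symm_apply] at h3
    rw [cw_aa] at h3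
    exact aa_ne_bb h3.symm
  · intro σ hσ
    simp only [Finset.mem_filter, Finset.mem_univ, true_and] at hσ ⊢
    exact s4_mem hσ.1 hσ.2.1 hσ.2.2
  · intro σ hσ
    exact cw_invol σ

lemma sumS2 :
    ∑ σ ∈ Finset.univ.filter
      (fun σ : Perm (Fin (m + 2)) => (∀ i, σ i ≠ i) ∧ σ (aa m) = bb m ∧ σ (bb m) ≠ aa m),
      wgt x y σ = y * dsum (m + 1) x y := by
  rw [dsum, Finset.mul_sum]
  symm
  apply Finset.sum_bij (fun (σ' : Perm (Fin (m + 1))) _ => ext σ' * cw m)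
  · intro σ' hσ'
    simp only [Finset.mem_filter, Finset.mem_univ, true_and] at hσ' ⊢
    exact phiB_mem σ' hσ'
  · intro σ₁ h₁ σ₂ h₂ hEq
    exact ext_inj (mul_right_cancel hEq)
  · intro σ hσ
    simp only [Finset.mem_filter, Finset.mem_univ, true_and] at hσ
    obtain ⟨hd, h1, h2⟩ := hσ
    have hfix : (σ * cw m) (Fin.last (m + 1)) = Fin.last (m + 1) := by
      show σ (cw m (bb m)) = bb m
      rw [cw_bb]
      exact h1
    obtain ⟨σ', hσ'⟩ := exists_ext _ hfix
    have hd' : ∀ i, σ' i ≠ i := by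
      intro i hEq
      have h3 : ext σ' i.castSucc = i.castSucc := by rw [ext_castSucc, hEq]
      rw [hσ'] at h3
      rcases eq_or_ne i (Fin.last m) with rfl | hne
      · have h4 : (σ * cw m) ((Fin.last m).castSucc) = σ (bb m) := by
          show σ (cw m (aa m)) = σ (bb m)
          rw [cw_aa]
        rw [h4] at h3
        exact h2 h3
      · have h4 : (σ * cw m) i.castSucc = σ i.castSucc := by
          show σ (cw m i.castSucc) = σ i.castSucc
          rw [cw_ne (fun h => hne (cs_eq_aa_iff.1 h)) (cs_ne_bb i)]
        rw [h4] at h3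
        exact hd _ h3
    refine ⟨σ', by simp only [Finset.mem_filter, Finset.mem_univ, true_and]; exact hd', ?_⟩
    rw [hσ', mul_cw_cw]
  · intro σ' hσ'
    simp only [Finset.mem_filter, Finset.mem_univ, true_and] at hσ'
    have hmem := phiB_mem σ' hσ'
    have hexc := phiB_exc σ' hσ'
    have hrlm := phiB_rlm σ' hσ'
    have hsign : Perm.sign (ext σ' * cw m) = -Perm.sign σ' := by
      rw [Equiv.Perm.sign_mul, sign_cw, sign_ext, mul_neg_one]
    have hcyc := cyc_step (R := R) (ext σ' * cw m) σ' hmem.1 hσ' hsign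
    unfold wgt
    rw [hexc, hrlm, hcyc]
    have hexcc : (insert (aa m) ((excIdx σ').image Fin.castSucc)).card
        = (excIdx σ').card + 1 := by
      rw [Finset.card_insert_of_notMem, Finset.card_image_of_injective _
        (Fin.castSucc_injective _)]
      intro hcon
      obtain ⟨j, hj, hjj⟩ := Finset.mem_image.1 hcon
      obtain rfl := cs_eq_aa_iff.1 hjj
      exact last_not_mem_exc σ' hj
    have hrlmc : ((rlmIdx σ').image (hB m)).card = (rlmIdx σ').card :=
      Finset.card_image_of_injective _ hB_inj
    rw [hexcc, hrlmc, pow_succ]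
    ring

lemma sumS3 :
    ∑ σ ∈ Finset.univ.filter
      (fun σ : Perm (Fin (m + 2)) => (∀ i, σ i ≠ i) ∧ σ (aa m) ≠ bb m ∧ σ (bb m) = aa m),
      wgt x y σ = x * dsum (m + 1) x y := by
  rw [dsum, Finset.mul_sum]
  symm
  apply Finset.sum_bij (fun (σ' : Perm (Fin (m + 1))) _ => cw m * ext σ')
  · intro σ' hσ'
    simp only [Finset.mem_filter, Finset.mem_univ, true_and] at hσ' ⊢
    exact phiC_mem σ' hσ'
  · intro σ₁ h₁ σ₂ h₂ hEq
    exact ext_inj (mul_left_cancel hEq)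
  · intro σ hσ
    simp only [Finset.mem_filter, Finset.mem_univ, true_and] at hσ
    obtain ⟨hd, h1, h2⟩ := hσ
    have hfix : (cw m * σ) (Fin.last (m + 1)) = Fin.last (m + 1) := by
      show cw m (σ (bb m)) = bb m
      rw [h2, cw_aa]
    obtain ⟨σ', hσ'⟩ := exists_ext _ hfix
    have hd' : ∀ i, σ' i ≠ i := by
      intro i hEq
      have h3 : ext σ' i.castSucc = i.castSucc := by rw [ext_castSucc, hEq]
      rw [hσ'] at h3
      rcases eq_or_ne i (Fin.last m) with rfl | hne
      · have h4 : cw m (σ (aa m)) = aa m := h3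
        have h5 : σ (aa m) = cw m (aa m) := by
          have := congrArg (cw m) h4
          rwa [cw_invol''] at this
        rw [cw_aa] at h5
        exact h1 h5
      · have h4 : cw m (σ i.castSucc) = i.castSucc := h3
        have h5 : σ i.castSucc = cw m i.castSucc := by
          have := congrArg (cw m) h4
          rwa [cw_invol''] at this
        rw [cw_ne (fun h => hne (cs_eq_aa_iff.1 h)) (cs_ne_bb i)] at h5
        exact hd _ h5
    refine ⟨σ', by simp only [Finset.mem_filter, Finset.mem_univ, true_and]; exact hd', ?_⟩
    rw [hσ', cw_invol]
  · intro σ' hσ'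
    simp only [Finset.mem_filter, Finset.mem_univ, true_and] at hσ'
    have hmem := phiC_mem σ' hσ'
    have hexc := phiC_exc σ' hσ'
    have hrlm := phiC_rlm σ' hσ'
    have hsign : Perm.sign (cw m * ext σ') = -Perm.sign σ' := by
      rw [Equiv.Perm.sign_mul, sign_cw, sign_ext, neg_one_mul]
    have hcyc := cyc_step (R := R) (cw m * ext σ') σ' hmem.1 hσ' hsign
    unfold wgt
    rw [hexc, hrlm, hcyc]
    have hexcc : ((excIdx σ').image Fin.castSucc).card = (excIdx σ').card :=
      Finset.card_image_of_injective _ (Fin.castSucc_injective _)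
    have hrlmc : (insert (bb m) ((rlmIdx σ').image Fin.castSucc)).card
        = (rlmIdx σ').card + 1 := by
      rw [Finset.card_insert_of_notMem, Finset.card_image_of_injective _
        (Fin.castSucc_injective _)]
      intro hcon
      obtain ⟨j, hj, hjj⟩ := Finset.mem_image.1 hcon
      exact cs_ne_bb j hjj
    rw [hexcc, hrlmc, pow_succ]
    ring

lemma sumS1 :
    ∑ σ ∈ Finset.univ.filter
      (fun σ : Perm (Fin (m + 2)) => (∀ i, σ i ≠ i) ∧ σ (aa m) = bb m ∧ σ (bb m) = aa m),
      wgt x y σ = -(x * y) * dsum m x y := by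
  rw [dsum, Finset.mul_sum]
  symm
  apply Finset.sum_bij (fun (σ'' : Perm (Fin m)) _ => ext (ext σ'') * cw m)
  · intro σ'' hσ''
    simp only [Finset.mem_filter, Finset.mem_univ, true_and] at hσ'' ⊢
    exact phiA_mem σ'' hσ''
  · intro σ₁ h₁ σ₂ h₂ hEq
    exact ext_inj (ext_inj (mul_right_cancel hEq))
  · intro σ hσ
    simp only [Finset.mem_filter, Finset.mem_univ, true_and] at hσ
    obtain ⟨hd, h1, h2⟩ := hσ
    have hfix : (σ * cw m) (Fin.last (m + 1)) = Fin.last (m + 1) := by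
      show σ (cw m (bb m)) = bb m
      rw [cw_bb]
      exact h1
    obtain ⟨σ₁, hσ₁⟩ := exists_ext _ hfix
    have hfix1 : σ₁ (Fin.last m) = Fin.last m := by
      have h3 : ext σ₁ ((Fin.last m).castSucc) = (σ₁ (Fin.last m)).castSucc :=
        ext_castSucc _ _
      rw [hσ₁] at h3
      have h4 : (σ * cw m) ((Fin.last m).castSucc) = aa m := by
        show σ (cw m (aa m)) = aa m
        rw [cw_aa]
        exact h2
      rw [h4] at h3
      exact (Fin.castSucc_inj.1 h3.symm)
    obtain ⟨σ₂, hσ₂⟩ := exists_ext _ hfix1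
    have hd'' : ∀ i, σ₂ i ≠ i := by
      intro i hEq
      have h3 : ext (ext σ₂) i.castSucc.castSucc = i.castSucc.castSucc := by
        rw [ext_castSucc, ext_castSucc, hEq]
      rw [hσ₂, hσ₁] at h3
      have h4 : (σ * cw m) i.castSucc.castSucc = σ i.castSucc.castSucc := by
        show σ (cw m _) = σ _
        rw [cw_ne (fun h => (Fin.castSucc_lt_last i).ne (Fin.castSucc_inj.1 h))
          (cs_ne_bb _)]
      rw [h4] at h3
      exact hd _ h3
    refine ⟨σ₂, by simp only [Finset.mem_filter, Finset.mem_univ, true_and]; exact hd'', ?_⟩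
    rw [hσ₂, hσ₁, mul_cw_cw]
  · intro σ'' hσ''
    simp only [Finset.mem_filter, Finset.mem_univ, true_and] at hσ''
    have hmem := phiA_mem σ'' hσ''
    have hexc := phiA_exc σ'' hσ''
    have hrlm := phiA_rlm σ'' hσ''
    have hsign : Perm.sign (ext (ext σ'') * cw m) = -Perm.sign σ'' := by
      rw [Equiv.Perm.sign_mul, sign_cw, sign_ext, sign_ext, mul_neg_one]
    have hcyc := cyc_two_step (R := R) (ext (ext σ'') * cw m) σ'' hmem.1 hσ'' hsign
    unfold wgt
    rw [hexc, hrlm, hcyc]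
    have hinj : Function.Injective (fun j : Fin m => j.castSucc.castSucc) := by
      intro j1 j2 h
      exact Fin.castSucc_inj.1 (Fin.castSucc_inj.1 h)
    have hexcc : (insert (aa m) ((excIdx σ'').image fun j => j.castSucc.castSucc)).card
        = (excIdx σ'').card + 1 := by
      rw [Finset.card_insert_of_notMem, Finset.card_image_of_injective _ hinj]
      intro hcon
      obtain ⟨j, hj, hjj⟩ := Finset.mem_image.1 hcon
      exact (Fin.castSucc_lt_last j).ne (Fin.castSucc_inj.1 hjj)
    have hrlmc : (insert (bb m) ((rlmIdx σ'').image fun j => j.castSucc.castSucc)).card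
        = (rlmIdx σ'').card + 1 := by
      rw [Finset.card_insert_of_notMem, Finset.card_image_of_injective _ hinj]
      intro hcon
      obtain ⟨j, hj, hjj⟩ := Finset.mem_image.1 hcon
      exact cs_ne_bb _ hjj
    rw [hexcc, hrlmc, pow_succ, pow_succ]
    ring

lemma dsum_rec : dsum (m + 2) x y = (x + y) * dsum (m + 1) x y - x * y * dsum m x y := by
  classical
  have h1 := Finset.sum_filter_add_sum_filter_not
      (Finset.univ.filter (fun σ : Perm (Fin (m + 2)) => ∀ i, σ i ≠ i))
      (fun σ => σ (aa m) = bb m) (wgt x y)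
  have h2 := Finset.sum_filter_add_sum_filter_not
      ((Finset.univ.filter (fun σ : Perm (Fin (m + 2)) => ∀ i, σ i ≠ i)).filter
        (fun σ => σ (aa m) = bb m))
      (fun σ => σ (bb m) = aa m) (wgt x y)
  have h3 := Finset.sum_filter_add_sum_filter_not
      ((Finset.univ.filter (fun σ : Perm (Fin (m + 2)) => ∀ i, σ i ≠ i)).filter
        (fun σ => ¬σ (aa m) = bb m))
      (fun σ => σ (bb m) = aa m) (wgt x y)
  have hs1 : ((Finset.univ.filter (fun σ : Perm (Fin (m + 2)) => ∀ i, σ i ≠ i)).filter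
        (fun σ => σ (aa m) = bb m)).filter (fun σ => σ (bb m) = aa m)
      = Finset.univ.filter
        (fun σ : Perm (Fin (m + 2)) => (∀ i, σ i ≠ i) ∧ σ (aa m) = bb m ∧ σ (bb m) = aa m) := by
    rw [Finset.filter_filter, Finset.filter_filter]
    try exact Finset.filter_congr (fun σ _ => by tauto)
  have hs2 : ((Finset.univ.filter (fun σ : Perm (Fin (m + 2)) => ∀ i, σ i ≠ i)).filter
        (fun σ => σ (aa m) = bb m)).filter (fun σ => ¬σ (bb m) = aa m)
      = Finset.univ.filter
        (fun σ : Perm (Fin (m + 2)) => (∀ i, σ i ≠ i) ∧ σ (aa m) = bb m ∧ σ (bb m) ≠ aa m) := by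
    rw [Finset.filter_filter, Finset.filter_filter]
    try exact Finset.filter_congr (fun σ _ => by tauto)
  have hs3 : ((Finset.univ.filter (fun σ : Perm (Fin (m + 2)) => ∀ i, σ i ≠ i)).filter
        (fun σ => ¬σ (aa m) = bb m)).filter (fun σ => σ (bb m) = aa m)
      = Finset.univ.filter
        (fun σ : Perm (Fin (m + 2)) => (∀ i, σ i ≠ i) ∧ σ (aa m) ≠ bb m ∧ σ (bb m) = aa m) := by
    rw [Finset.filter_filter, Finset.filter_filter]
    try exact Finset.filter_congr (fun σ _ => by tauto)
  have hs4 : ((Finset.univ.filter (fun σ : Perm (Fin (m + 2)) => ∀ i, σ i ≠ i)).filter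
        (fun σ => ¬σ (aa m) = bb m)).filter (fun σ => ¬σ (bb m) = aa m)
      = Finset.univ.filter
        (fun σ : Perm (Fin (m + 2)) => (∀ i, σ i ≠ i) ∧ σ (aa m) ≠ bb m ∧ σ (bb m) ≠ aa m) := by
    rw [Finset.filter_filter, Finset.filter_filter]
    try exact Finset.filter_congr (fun σ _ => by tauto)
  rw [hs1, hs2] at h2
  rw [hs3, hs4] at h3
  rw [dsum, ← h1, ← h2, ← h3, sumS1 x y, sumS2 x y, sumS3 x y, sumS4 x y]
  ring

end Sums


section Final
variable {R : Type*} [Field R] (x y : R)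

lemma dsum_zero : dsum 0 x y = 1 := by
  rw [dsum]
  have h1 : (Finset.univ.filter (fun σ : Perm (Fin 0) => ∀ i, σ i ≠ i)) = {1} := by
    apply Finset.eq_singleton_iff_unique_mem.2
    constructor
    · simp only [Finset.mem_filter, Finset.mem_univ, true_and]
      intro i; exact i.elim0
    · intro σ _
      exact Equiv.ext (fun i => i.elim0)
  rw [h1, Finset.sum_singleton]
  unfold wgt cyc
  rw [Equiv.Perm.cycleType_one]
  have h2 : (Finset.univ : Finset (Fin 0)) = ∅ := Finset.univ_eq_empty
  have h3 : excIdx (1 : Perm (Fin 0)) = ∅ := by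
    rw [excIdx, h2, Finset.filter_empty]
  have h4 : rlmIdx (1 : Perm (Fin 0)) = ∅ := by
    rw [rlmIdx, h2, Finset.filter_empty]
  rw [h3, h4, h2, Finset.filter_empty]
  simp

lemma dsum_one : dsum 1 x y = 0 := by
  rw [dsum]
  have h1 : (Finset.univ.filter (fun σ : Perm (Fin 1) => ∀ i, σ i ≠ i)) = ∅ := by
    apply Finset.filter_eq_empty_iff.2
    intro σ _
    push_neg
    exact ⟨0, Subsingleton.elim _ _⟩
  rw [h1, Finset.sum_empty]

/-- the polynomial `x y^k + x^2 y^(k-1) + ... + x^k y` -/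
def SS (x y : R) (k : ℕ) : R := ∑ j ∈ Finset.range k, x ^ (j + 1) * y ^ (k - j)

lemma peelY (k : ℕ) : SS x y (k + 1) = y * SS x y k + x ^ (k + 1) * y := by
  rw [SS, SS, Finset.sum_range_succ, Finset.mul_sum]
  have h1 : k + 1 - k = 1 := by omega
  rw [h1, pow_one]
  congr 1
  apply Finset.sum_congr rfl
  intro j hj
  have hjk : j < k := Finset.mem_range.1 hj
  have h2 : k + 1 - j = (k - j) + 1 := by omega
  rw [h2, pow_succ]
  ring

lemma peelX (k : ℕ) : SS x y (k + 1) = x * SS x y k + x * y ^ (k + 1) := by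
  rw [SS, SS, Finset.sum_range_succ', Finset.mul_sum]
  have h1 : x ^ (0 + 1) * y ^ (k + 1 - 0) = x * y ^ (k + 1) := by
    norm_num
  rw [h1]
  congr 1
  apply Finset.sum_congr rfl
  intro j hj
  have hjk : j < k := Finset.mem_range.1 hj
  have h2 : k + 1 - (j + 1) = k - j := by omega
  rw [h2, pow_succ]
  ring

lemma SSrec (l : ℕ) : SS x y (l + 2) = (x + y) * SS x y (l + 1) - x * y * SS x y l := by
  linear_combination peelX x y (l + 1) - y * peelX x y l

lemma SStel (k : ℕ) : (x - y) * SS x y k = x ^ (k + 1) * y - x * y ^ (k + 1) := by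
  linear_combination peelY x y k - peelX x y k

/-- target polynomial -/
def TT (x y : R) : ℕ → R
  | 0 => 1
  | (k + 1) => -SS x y k

lemma TTrec (k : ℕ) : TT x y (k + 2) = (x + y) * TT x y (k + 1) - x * y * TT x y k := by
  match k with
  | 0 =>
      show -SS x y 1 = (x + y) * (-SS x y 0) - x * y * 1
      simp only [SS, Finset.sum_range_one, Finset.range_zero, Finset.sum_empty]
      norm_num
      try ring
  | 1 =>
      show -SS x y 2 = (x + y) * (-SS x y 1) - x * y * (-SS x y 0)
      simp only [SS, Finset.sum_range_succ, Finset.sum_range_one, Finset.range_zero,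
        Finset.sum_empty]
      norm_num
      try ring
  | (l + 2) =>
      show -SS x y (l + 3) = (x + y) * (-SS x y (l + 2)) - x * y * (-SS x y (l + 1))
      linear_combination -SSrec x y (l + 1)

lemma dsum_eq_TT (k : ℕ) : dsum k x y = TT x y k := by
  induction k using Nat.strong_induction_on with
  | _ k ih =>
    match k with
    | 0 => rw [dsum_zero]; rfl
    | 1 =>
        rw [dsum_one]
        show (0 : R) = -SS x y 0
        simp [SS]
    | (l + 2) =>
        rw [dsum_rec, ih (l + 1) (by omega), ih l (by omega)]
        exact (TTrec x y l).symm

end Final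
end Stmt9

open Stmt9 in
theorem stmt9 {R : Type*} [Field R] (n : ℕ) (x y : R) (hn : 2 ≤ n) :
    (∑ σ ∈ Finset.univ.filter (fun σ : Equiv.Perm (Fin n) => ∀ i, σ i ≠ i),
        (-1 : R) ^ cyc σ * x ^ (rlmIdx σ).card * y ^ (excIdx σ).card
      = -∑ j ∈ Finset.Icc 1 (n - 1), x ^ j * y ^ (n - j)) ∧
    (x ≠ y →
      ∑ σ ∈ Finset.univ.filter (fun σ : Equiv.Perm (Fin n) => ∀ i, σ i ≠ i),
        (-1 : R) ^ cyc σ * x ^ (rlmIdx σ).card * y ^ (excIdx σ).card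
      = x * y / (x - y) * (y ^ (n - 1) - x ^ (n - 1))) := by
  obtain ⟨p, rfl⟩ : ∃ p, n = p + 2 := ⟨n - 2, by omega⟩
  have hsum : (∑ σ ∈ Finset.univ.filter (fun σ : Equiv.Perm (Fin (p + 2)) => ∀ i, σ i ≠ i),
      (-1 : R) ^ cyc σ * x ^ (rlmIdx σ).card * y ^ (excIdx σ).card) = dsum (p + 2) x y := by
    rw [dsum]; rfl
  have hn1 : p + 2 - 1 = p + 1 := by omega
  have hIcc : (∑ j ∈ Finset.Icc 1 (p + 1), x ^ j * y ^ (p + 2 - j)) = SS x y (p + 1) := by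
    rw [← Finset.Ico_add_one_right_eq_Icc, Finset.sum_Ico_eq_sum_range, SS]
    have h2 : p + 1 + 1 - 1 = p + 1 := by omega
    rw [h2]
    apply Finset.sum_congr rfl
    intro j hj
    have hjk : j < p + 1 := Finset.mem_range.1 hj
    have h4 : p + 2 - (1 + j) = p + 1 - j := by omega
    have h3 : 1 + j = j + 1 := by omega
    rw [h4, h3]
  have hmain : (∑ σ ∈ Finset.univ.filter (fun σ : Equiv.Perm (Fin (p + 2)) => ∀ i, σ i ≠ i),
      (-1 : R) ^ cyc σ * x ^ (rlmIdx σ).card * y ^ (excIdx σ).card)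
      = -∑ j ∈ Finset.Icc 1 (p + 2 - 1), x ^ j * y ^ (p + 2 - j) := by
    rw [hsum, dsum_eq_TT, hn1, hIcc]
    rfl
  refine ⟨hmain, ?_⟩
  intro hxy
  have hxy' : x - y ≠ 0 := sub_ne_zero.2 hxy
  have hmain2 := hmain
  rw [hn1, hIcc] at hmain2
  rw [hmain2, hn1]
  rw [div_mul_eq_mul_div, eq_div_iff hxy']
  linear_combination -SStel x y (p + 1)
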